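/- With v ≤ y ≤ w sequences in S̄, one has the equality of sublattices (wF − 1)·Y(T) + Y_{w,v} = (vF − 1)·Y(T) + Y_{w,v} of Y(T); consequently, the norm maps N_w and N_y induce a canonical isomorphism T^{wF}/N_w(Y_{w,v}) ≅ T^{yF}/N_y(Y_{w,v}). -/

import Mathlib

/-! Setting as in the companion statements: `G` is a connected reductive group with
`F`-stable maximal torus `T` and cocharacter lattice `Y = Y(T)`.  A sequence
`w = (s₁, …, s_r)` of elements of `S̄ = S ∪ {1}` is modelled by `ℤ`-linear
endomorphisms `s i` of `Y` satisfying `s i x - x ∈ ℤ • α i`; subsequences are Boolean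
masks.  The isogeny `F` acts on `Y(T)` by the endomorphism `F`, so the twisted
endomorphism `wF` of `Y(T)` is `seqProd s b * F`.

By the exact sequence `0 → Y(T) → Y(T) → T^{wF} → 0` of Statement 1 (with `N_w`
surjective with kernel `(wF−1)Y(T)`), the quotient `T^{wF}/N_w(Y_{w,v})` is canonically
`Y(T)/((wF−1)Y(T) + Y_{w,v})`; this is how the second assertion is phrased below. -/

namespace DLStmt4

variable {Y : Type*} [AddCommGroup Y] [Module ℤ Y] {r : ℕ}

/-- The `i`-th entry of the masked sequence: `s i` if the mask is `true`, `1` otherwise. -/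
def entry (s : Fin r → Module.End ℤ Y) (b : Fin r → Bool) (i : Fin r) : Module.End ℤ Y :=
  if b i then s i else 1

/-- The partial product `s₁ ⋯ s_{i-1}` of the masked sequence (first `i` entries). -/
def prefixProd (s : Fin r → Module.End ℤ Y) (b : Fin r → Bool) (i : Fin r) :
    Module.End ℤ Y :=
  ((List.ofFn (entry s b)).take i).prod

/-- The product `s₁ ⋯ s_r` of the masked sequence, i.e. the action of the corresponding
Weyl group element on `Y(T)`. -/
def seqProd (s : Fin r → Module.End ℤ Y) (b : Fin r → Bool) : Module.End ℤ Y :=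
  (List.ofFn (entry s b)).prod

/-- `α^∨_{w,v,i}`: the coroot `α i` if the `i`-th entries of the two masked sequences
differ, and `0` otherwise. -/
def alphaD (α : Fin r → Y) (bw bv : Fin r → Bool) (i : Fin r) : Y :=
  if bw i = bv i then 0 else α i

/-- `β^∨_{w,v,i} = s₁ ⋯ s_{i-1} (α^∨_{w,v,i})`. -/
def betaD (s : Fin r → Module.End ℤ Y) (α : Fin r → Y) (bw bv : Fin r → Bool)
    (i : Fin r) : Y :=
  prefixProd s bw i (alphaD α bw bv i)

/-- The sublattice `Y_{w,v} ⊆ Y(T)` generated by the `β^∨_{w,v,i}`. -/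
def latt (s : Fin r → Module.End ℤ Y) (α : Fin r → Y) (bw bv : Fin r → Bool) :
    Submodule ℤ Y :=
  Submodule.span ℤ (Set.range (betaD s α bw bv))

lemma take_succ_prod (f : Fin r → Module.End ℤ Y) (k : ℕ) (hk : k < r) :
    ((List.ofFn f).take (k + 1)).prod = ((List.ofFn f).take k).prod * f ⟨k, hk⟩ := by
  rw [List.take_succ, List.prod_append]
  have : (List.ofFn f)[k]? = some (f ⟨k, hk⟩) := by
    rw [List.getElem?_eq_getElem (by simpa using hk)]
    simp
  simp [this]

lemma key (s : Fin r → Module.End ℤ Y) (α : Fin r → Y)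
    (hrefl : ∀ (i : Fin r) (x : Y), ∃ n : ℤ, s i x - x = n • α i)
    (bv b : Fin r → Bool) (hb : ∀ i, bv i ≤ b i) :
    ∀ k, k ≤ r → ∀ y : Y,
      ((List.ofFn (entry s (fun _ => true))).take k).prod y
        - ((List.ofFn (entry s b)).take k).prod y ∈ latt s α (fun _ => true) bv := by
  intro k
  induction k with
  | zero => simp
  | succ k ih =>
    intro hk y
    have hk' : k < r := hk
    set i : Fin r := ⟨k, hk'⟩
    set P := ((List.ofFn (entry s (fun _ => true))).take k).prod with hP
    set Q := ((List.ofFn (entry s b)).take k).prod with hQ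
    rw [take_succ_prod _ k hk', take_succ_prod _ k hk']
    have hew : entry s (fun _ => true) i = s i := by simp [entry]
    have ihk := ih (le_of_lt hk')
    have hsplit : (P * entry s (fun _ => true) i) y - (Q * entry s b i) y
        = (P (s i y) - Q (s i y)) + (Q (s i y) - Q (entry s b i y)) := by
      rw [hew]; simp [Module.End.mul_apply]
    rw [hsplit]
    refine Submodule.add_mem _ (ihk _) ?_
    by_cases hbi : b i
    · have he : entry s b i = s i := by unfold entry; rw [if_pos hbi]
      rw [he]
      simpa using Submodule.zero_mem (latt s α (fun _ => true) bv)
    · have hbi' : b i = false := by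
        cases hb2 : b i
        · rfl
        · exact absurd hb2 hbi
      have hbvi : bv i = false := by
        have := hb i; rw [hbi'] at this; exact le_bot_iff.mp this
      have hentry : entry s b i = 1 := by simp [entry, hbi]
      obtain ⟨n, hn⟩ := hrefl i y
      have : Q (s i y) - Q (entry s b i y) = n • Q (α i) := by
        rw [hentry, show (1 : Module.End ℤ Y) y = y from rfl, ← map_sub, hn, map_zsmul]
      rw [this]
      refine AddSubgroup.zsmul_mem (latt s α (fun _ => true) bv).toAddSubgroup ?_ n
      have hbeta : betaD s α (fun _ => true) bv i = P (α i) := by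
        simp [betaD, prefixProd, alphaD, hbvi, hP]; rfl
      have hmem : P (α i) ∈ latt s α (fun _ => true) bv := by
        rw [← hbeta]
        exact Submodule.subset_span ⟨i, rfl⟩
      have : Q (α i) = P (α i) - (P (α i) - Q (α i)) := by abel
      rw [this]
      exact Submodule.sub_mem _ hmem (ihk _)

lemma seqProd_eq_take (s : Fin r → Module.End ℤ Y) (b : Fin r → Bool) :
    seqProd s b = ((List.ofFn (entry s b)).take r).prod := by
  rw [seqProd, List.take_of_length_le (le_of_eq List.length_ofFn)]

lemma sup_eq (s : Fin r → Module.End ℤ Y) (α : Fin r → Y)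
    (hrefl : ∀ (i : Fin r) (x : Y), ∃ n : ℤ, s i x - x = n • α i)
    (F : Module.End ℤ Y)
    (bv b : Fin r → Bool) (hb : ∀ i, bv i ≤ b i) :
    LinearMap.range (seqProd s (fun _ => true) * F - 1) ⊔ latt s α (fun _ => true) bv =
      LinearMap.range (seqProd s b * F - 1) ⊔ latt s α (fun _ => true) bv := by
  have hdiff : ∀ y : Y, seqProd s (fun _ => true) y - seqProd s b y
      ∈ latt s α (fun _ => true) bv := by
    intro y
    rw [seqProd_eq_take, seqProd_eq_take]
    exact key s α hrefl bv b hb r le_rfl y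
  apply le_antisymm
  · refine sup_le ?_ le_sup_right
    rintro x ⟨z, rfl⟩
    have : (seqProd s (fun _ => true) * F - 1) z
        = (seqProd s b * F - 1) z + (seqProd s (fun _ => true) (F z) - seqProd s b (F z)) := by
      simp [Module.End.mul_apply]
    rw [this]
    exact Submodule.add_mem _ (Submodule.mem_sup_left ⟨z, rfl⟩)
      (Submodule.mem_sup_right (hdiff _))
  · refine sup_le ?_ le_sup_right
    rintro x ⟨z, rfl⟩
    have : (seqProd s b * F - 1) z
        = (seqProd s (fun _ => true) * F - 1) z
          - (seqProd s (fun _ => true) (F z) - seqProd s b (F z)) := by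
      simp [Module.End.mul_apply]
    rw [this]
    exact Submodule.sub_mem _ (Submodule.mem_sup_left ⟨z, rfl⟩)
      (Submodule.mem_sup_right (hdiff _))

/-- With `v ≤ y ≤ w` sequences in `S̄`, one has the equality of sublattices
`(wF − 1)·Y(T) + Y_{w,v} = (vF − 1)·Y(T) + Y_{w,v}` of `Y(T)`; consequently, the norm
maps `N_w` and `N_y` induce a canonical isomorphism
`T^{wF}/N_w(Y_{w,v}) ≅ T^{yF}/N_y(Y_{w,v})` (expressed here, via the exact sequence of
Statement 1, as the identity-induced isomorphism
`Y/((wF−1)Y + Y_{w,v}) ≅ Y/((yF−1)Y + Y_{w,v})`). -/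
theorem statement4 (s : Fin r → Module.End ℤ Y) (α : Fin r → Y)
    (hrefl : ∀ (i : Fin r) (x : Y), ∃ n : ℤ, s i x - x = n • α i)
    (hα0 : ∀ i : Fin r, s i = 1 → α i = 0)
    (F : Module.End ℤ Y)
    (bv bY : Fin r → Bool) (hvy : ∀ i, bv i ≤ bY i) :
    (LinearMap.range (seqProd s (fun _ => true) * F - 1) ⊔ latt s α (fun _ => true) bv =
       LinearMap.range (seqProd s bv * F - 1) ⊔ latt s α (fun _ => true) bv) ∧
    ∃ e : (Y ⧸ (LinearMap.range (seqProd s (fun _ => true) * F - 1) ⊔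
              latt s α (fun _ => true) bv)) ≃ₗ[ℤ]
          (Y ⧸ (LinearMap.range (seqProd s bY * F - 1) ⊔
              latt s α (fun _ => true) bv)),
      ∀ x : Y, e (Submodule.Quotient.mk x) = Submodule.Quotient.mk x := by
  refine ⟨sup_eq s α hrefl F bv bv (fun i => le_rfl), ?_⟩
  rw [sup_eq s α hrefl F bv bY hvy]
  exact ⟨LinearEquiv.refl ℤ _, fun x => rfl⟩

end DLStmt4
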